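/- arXiv:1701.01396 — 3 statements merged into one kernel-verified Lean document; each statement's English description precedes it below -/
import Mathlib

section
/- Suppose Q and Q′ are linearly independent quadratic forms in R₂ such that every nonzero element of kQ + kQ′ has rank at most two, and suppose Q = ab where a, b ∈ R₁ are linearly independent. Then Q′ ∈ R₁a, or Q′ ∈ R₁b, or Q′ = αa² + βab + γb² for some α, γ ∈ k^× and β ∈ k. ([SV], Lemma 2.3, second assertion.) -/
/-!
STATEMENT 5: Suppose Q, Q′ ∈ R₂ are linearly independent and every nonzero
element of kQ + kQ′ has rank at most two, and Q = ab with a, b ∈ R₁ linearly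
independent. Then Q′ ∈ R₁a, or Q′ ∈ R₁b, or Q′ = αa² + βab + γb² with
α, γ ∈ k^× and β ∈ k.
-/

noncomputable section

open MvPolynomial

/-- The quadratic form `xᵀNx` associated to a 4×4 matrix `N`. -/
def quadOfMat (k : Type*) [Field k] (N : Matrix (Fin 4) (Fin 4) k) :
    MvPolynomial (Fin 4) k :=
  ∑ i, ∑ j, N i j • (X i * X j)

/-- `q` has rank at most `r`: the (unique, as char k ≠ 2) symmetric matrix `N`
with `q = xᵀNx` has rank at most `r`. -/
def HasRankLE (k : Type*) [Field k] (q : MvPolynomial (Fin 4) k) (r : ℕ) : Prop :=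
  ∃ N : Matrix (Fin 4) (Fin 4) k, N.IsSymm ∧ q = quadOfMat k N ∧ N.rank ≤ r

namespace Stmt5Aux

open Matrix

variable {k : Type*} [Field k]

lemma degree_one_single (d : Fin 4 →₀ ℕ) (h : d.degree = 1) :
    ∃ i, d = Finsupp.single i 1 := by
  have hd0 : d ≠ 0 := by
    intro h0; rw [h0, map_zero] at h; exact one_ne_zero h.symm
  obtain ⟨i, hi⟩ := Finsupp.support_nonempty_iff.mpr hd0
  refine ⟨i, ?_⟩
  have hsub : d.support ⊆ {i} := by
    intro j hj
    by_contra hji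
    simp only [Finset.mem_singleton] at hji
    have hpair : ({i, j} : Finset (Fin 4)) ⊆ d.support := by
      intro x hx; rcases Finset.mem_insert.mp hx with rfl | hx
      · exact hi
      · rwa [Finset.mem_singleton.mp hx]
    have h2 : d i + d j ≤ d.degree := by
      rw [Finsupp.degree]
      calc d i + d j = ∑ x ∈ ({i, j} : Finset (Fin 4)), d x := by
            rw [Finset.sum_pair (fun he => hji he.symm)]
        _ ≤ _ := Finset.sum_le_sum_of_subset hpair
    have h1i : 1 ≤ d i := Nat.one_le_iff_ne_zero.mpr (Finsupp.mem_support_iff.mp hi)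
    have h1j : 1 ≤ d j := Nat.one_le_iff_ne_zero.mpr (Finsupp.mem_support_iff.mp hj)
    omega
  have hdi : d i = 1 := by
    have : d.degree = d i := by
      rw [Finsupp.degree_apply, Finset.sum_eq_single_of_mem i hi]
      intro j hj hji
      exact absurd (Finset.mem_singleton.mp (hsub hj)) hji
    omega
  rw [Finsupp.eq_single_iff]
  exact ⟨hsub, hdi⟩

lemma linear_repr (p : MvPolynomial (Fin 4) k)
    (hp : p ∈ homogeneousSubmodule (Fin 4) k 1) :
    ∃ v : Fin 4 → k, p = ∑ i, v i • X i := by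
  refine ⟨fun i => coeff (Finsupp.single i 1) p, ?_⟩
  rw [mem_homogeneousSubmodule] at hp
  have hRHS : ∀ i : Fin 4, coeff (Finsupp.single i 1) p • (X i : MvPolynomial (Fin 4) k)
      = monomial (Finsupp.single i 1) (coeff (Finsupp.single i 1) p) := by
    intro i
    rw [X, smul_monomial, smul_eq_mul, mul_one]
  rw [Finset.sum_congr rfl (fun i _ => hRHS i)]
  have hinj : Set.InjOn (fun i : Fin 4 => Finsupp.single i (1:ℕ))
      ↑(Finset.univ : Finset (Fin 4)) := by
    intro i _ j _ hij
    exact Finsupp.single_left_injective one_ne_zero hij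
  have himg : ∑ d ∈ Finset.univ.image (fun i : Fin 4 => Finsupp.single i (1:ℕ)),
      monomial d (coeff d p)
      = ∑ i : Fin 4, monomial (Finsupp.single i 1) (coeff (Finsupp.single i 1) p) :=
    Finset.sum_image (fun i hi j hj => hinj hi hj)
  rw [← himg]
  conv_lhs => rw [p.as_sum]
  apply Finset.sum_subset
  · intro d hd
    have hdeg : d.degree = 1 := by
      by_contra hne
      exact (mem_support_iff.mp hd) (hp.coeff_eq_zero hne)
    obtain ⟨i, rfl⟩ := degree_one_single d hdeg
    exact Finset.mem_image.mpr ⟨i, Finset.mem_univ i, rfl⟩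
  · intro d _ hd
    rw [notMem_support_iff.mp hd, monomial_zero]

lemma eval_quadOfMat (N : Matrix (Fin 4) (Fin 4) k)
    (x : Fin 4 → k) : eval x (quadOfMat k N) = ∑ i, ∑ j, N i j * x i * x j := by
  simp [quadOfMat, smul_eq_C_mul, mul_assoc]

lemma quadOfMat_add (N N' : Matrix (Fin 4) (Fin 4) k) :
    quadOfMat k (N + N') = quadOfMat k N + quadOfMat k N' := by
  simp [quadOfMat, add_smul, Finset.sum_add_distrib]

lemma quadOfMat_smul (c : k) (N : Matrix (Fin 4) (Fin 4) k) :
    quadOfMat k (c • N) = c • quadOfMat k N := by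
  simp [quadOfMat, Finset.smul_sum, smul_smul]

lemma quadOfMat_sub (N N' : Matrix (Fin 4) (Fin 4) k) :
    quadOfMat k (N - N') = quadOfMat k N - quadOfMat k N' := by
  simp [quadOfMat, sub_smul, Finset.sum_sub_distrib]

lemma quadOfMat_eq_zero (hchar : (2:k) ≠ 0)
    (N : Matrix (Fin 4) (Fin 4) k) (hsym : N.IsSymm) (h : quadOfMat k N = 0) :
    N = 0 := by
  have he : ∀ x : Fin 4 → k, ∑ i, ∑ j, N i j * x i * x j = 0 := by
    intro x
    rw [← eval_quadOfMat, h, map_zero]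
  have hsym' : ∀ i j, N j i = N i j := fun i j => by
    conv_lhs => rw [← hsym]
    rfl
  have two_cancel : ∀ x : k, 2 * x = 0 → x = 0 := fun x hx =>
    (mul_eq_zero.mp hx).resolve_left hchar
  have key : ∀ i j : Fin 4, N i j = 0 := by
    have h0 := he ![1,0,0,0]
    have h1 := he ![0,1,0,0]
    have h2 := he ![0,0,1,0]
    have h3 := he ![0,0,0,1]
    have h01 := he ![1,1,0,0]
    have h02 := he ![1,0,1,0]
    have h03 := he ![1,0,0,1]
    have h12 := he ![0,1,1,0]
    have h13 := he ![0,1,0,1]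
    have h23 := he ![0,0,1,1]
    simp only [Fin.sum_univ_four, Matrix.cons_val_zero, Matrix.cons_val_one, Matrix.head_cons,
      Matrix.cons_val_two, Matrix.cons_val_three, Matrix.tail_cons, Matrix.head_fin_const,
      mul_zero, mul_one, zero_mul, one_mul, add_zero, zero_add]
      at h0 h1 h2 h3 h01 h02 h03 h12 h13 h23
    have e01 : N 0 1 = 0 := by
      have := hsym' 0 1
      apply two_cancel
      linear_combination h01 - h0 - h1 - this
    have e02 : N 0 2 = 0 := by
      have := hsym' 0 2
      apply two_cancel
      linear_combination h02 - h0 - h2 - this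
    have e03 : N 0 3 = 0 := by
      have := hsym' 0 3
      apply two_cancel
      linear_combination h03 - h0 - h3 - this
    have e12 : N 1 2 = 0 := by
      have := hsym' 1 2
      apply two_cancel
      linear_combination h12 - h1 - h2 - this
    have e13 : N 1 3 = 0 := by
      have := hsym' 1 3
      apply two_cancel
      linear_combination h13 - h1 - h3 - this
    have e23 : N 2 3 = 0 := by
      have := hsym' 2 3
      apply two_cancel
      linear_combination h23 - h2 - h3 - this
    intro i j
    fin_cases i <;> fin_cases j <;>
      first
        | exact h0 | exact h1 | exact h2 | exact h3
        | exact e01 | exact e02 | exact e03 | exact e12 | exact e13 | exact e23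
        | (rw [hsym']; first
            | exact e01 | exact e02 | exact e03 | exact e12 | exact e13 | exact e23)
  ext i j
  exact key i j

set_option maxHeartbeats 2000000 in
lemma quadOfMat_transform (S N : Matrix (Fin 4) (Fin 4) k) :
    quadOfMat k (Sᵀ * N * S)
      = ∑ i, ∑ j, N i j • ((∑ p, S i p • X p) * (∑ q, S j q • X q)) := by
  simp only [quadOfMat, Matrix.mul_apply, Matrix.transpose_apply, Fin.sum_univ_four]
  simp only [smul_eq_C_mul, C_add, C_mul]
  ring

lemma complete_basis (v w : Fin 4 → k)
    (hvw : LinearIndependent k ![v, w]) :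
    ∃ S : Matrix (Fin 4) (Fin 4) k, IsUnit S ∧ S 0 = v ∧ S 1 = w := by
  classical
  have hvw' : LinearIndependent k ((↑) : (Set.range ![v, w]) → (Fin 4 → k)) :=
    (linearIndepOn_id_range_iff hvw.injective).mpr hvw
  have hrange : Set.range ![v, w] = ({v, w} : Set (Fin 4 → k)) := by
    simp [Set.pair_comm w v]
  rw [hrange] at hvw'
  set s : Set (Fin 4 → k) := {v, w} with hs
  replace hvw' : LinearIndepOn k id s := hvw'
  let B := Module.Basis.extend hvw'
  have hsub : s ⊆ hvw'.extend (Set.subset_univ s) := hvw'.subset_extend _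
  haveI : Fintype (hvw'.extend (Set.subset_univ s)) :=
    FiniteDimensional.fintypeBasisIndex B
  let e : (hvw'.extend (Set.subset_univ s)) ≃ Fin 4 :=
    B.indexEquiv (Pi.basisFun k (Fin 4))
  have hvne : v ≠ w := by
    intro h
    have := LinearIndependent.pair_iff.mp hvw 1 (-1) (by rw [h]; ring_nf; simp)
    exact one_ne_zero this.1
  set xv : (hvw'.extend (Set.subset_univ s)) := ⟨v, hsub (by simp [hs])⟩
  set xw : (hvw'.extend (Set.subset_univ s)) := ⟨w, hsub (by simp [hs])⟩
  have hxvw : xv ≠ xw := fun h => hvne (congrArg Subtype.val h)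
  let f := e.trans (Equiv.swap (e xv) 0)
  have hfv : f xv = 0 := by simp [f]
  have hfw1 : f xw ≠ 0 := by
    rw [← hfv]
    exact fun h => hxvw (f.injective (h ▸ rfl)).symm
  let g := f.trans (Equiv.swap (f xw) 1)
  have hgv : g xv = 0 := by
    simp only [g, Equiv.trans_apply, hfv]
    rw [Equiv.swap_apply_of_ne_of_ne (Ne.symm hfw1) (by decide)]
  have hgw : g xw = 1 := by simp [g]
  let C := B.reindex g
  have hC0 : C 0 = v := by
    rw [← hgv]
    simp only [C, Module.Basis.reindex_apply, Equiv.symm_apply_apply]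
    exact Module.Basis.extend_apply_self _ _
  have hC1 : C 1 = w := by
    rw [← hgw]
    simp only [C, Module.Basis.reindex_apply, Equiv.symm_apply_apply]
    exact Module.Basis.extend_apply_self _ _
  refine ⟨Matrix.of (fun i j => C i j), ?_, ?_, ?_⟩
  · have h1 : (Pi.basisFun k (Fin 4)).toMatrix C * C.toMatrix (Pi.basisFun k (Fin 4)) = 1 :=
      Module.Basis.toMatrix_mul_toMatrix_flip _ _
    have hunit : IsUnit ((Pi.basisFun k (Fin 4)).toMatrix C) :=
      (Matrix.isUnit_iff_isUnit_det _).mpr (Matrix.isUnit_det_of_right_inverse h1)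
    have htr : (Pi.basisFun k (Fin 4)).toMatrix ⇑C = (Matrix.of (fun i j => C i j))ᵀ := by
      ext i j
      simp [Module.Basis.toMatrix_apply]
    rw [htr] at hunit
    rw [Matrix.isUnit_iff_isUnit_det] at hunit ⊢
    rwa [Matrix.det_transpose] at hunit
  · funext j; exact congrFun hC0 j
  · funext j; exact congrFun hC1 j

lemma det_minor_eq_zero (B : Matrix (Fin 4) (Fin 4) k) (hr : B.rank ≤ 2)
    (r c : Fin 3 → Fin 4) : (B.submatrix r c).det = 0 := by
  classical
  by_contra hne
  have hunit : IsUnit (B.submatrix r c) :=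
    (Matrix.isUnit_iff_isUnit_det _).mpr (isUnit_iff_ne_zero.mpr hne)
  have hrank3 : (B.submatrix r c).rank = 3 := by
    rw [Matrix.rank_of_isUnit _ hunit]; simp
  have hRmat : B.submatrix r c
      = (Matrix.of (fun (i : Fin 3) (p : Fin 4) => if p = r i then (1:k) else 0)) * B *
        (Matrix.of (fun (q : Fin 4) (j : Fin 3) => if q = c j then (1:k) else 0)) := by
    ext i j
    simp [Matrix.mul_apply, Finset.sum_ite_eq', ite_mul, mul_ite]
  have hle : (B.submatrix r c).rank ≤ B.rank := by
    rw [hRmat]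
    calc ((Matrix.of (fun (i : Fin 3) (p : Fin 4) => if p = r i then (1:k) else 0)) * B *
        (Matrix.of (fun (q : Fin 4) (j : Fin 3) => if q = c j then (1:k) else 0))).rank
        ≤ ((Matrix.of (fun (i : Fin 3) (p : Fin 4) => if p = r i then (1:k) else 0)) * B).rank :=
          Matrix.rank_mul_le_left _ _
      _ ≤ B.rank := Matrix.rank_mul_le_right _ _
  omega

/-- The matrix of `2·x₀x₁`. -/
def Emat (k : Type*) [Field k] : Matrix (Fin 4) (Fin 4) k :=
  !![0,1,0,0; 1,0,0,0; 0,0,0,0; 0,0,0,0]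

lemma matrix_struct (hchar : (2:k) ≠ 0) (m : Matrix (Fin 4) (Fin 4) k)
    (hsym : m.IsSymm) (hr : ∀ t : k, (m + t • Emat k).rank ≤ 2) :
    (m 1 1 = 0 ∧ m 1 2 = 0 ∧ m 1 3 = 0 ∧ m 2 2 = 0 ∧ m 2 3 = 0 ∧ m 3 3 = 0) ∨
    (m 0 0 = 0 ∧ m 0 2 = 0 ∧ m 0 3 = 0 ∧ m 2 2 = 0 ∧ m 2 3 = 0 ∧ m 3 3 = 0) ∨
    (m 0 2 = 0 ∧ m 0 3 = 0 ∧ m 1 2 = 0 ∧ m 1 3 = 0 ∧ m 2 2 = 0 ∧ m 2 3 = 0 ∧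
      m 3 3 = 0 ∧ m 0 0 ≠ 0 ∧ m 1 1 ≠ 0) := by
  have sq_cancel : ∀ x y : k, x ≠ 0 → y * x ^ 2 = 0 → y = 0 := fun x y hx h => by
    rcases mul_eq_zero.mp h with h' | h'
    · exact h'
    · exact absurd (pow_eq_zero_iff (n := 2) (by norm_num) |>.mp h') hx
  have two_cancel : ∀ x : k, 2 * x = 0 → x = 0 := fun x hx =>
    (mul_eq_zero.mp hx).resolve_left hchar
  have four_cancel : ∀ x : k, 4 * x = 0 → x = 0 := fun x hx =>
    two_cancel x (two_cancel (2*x) (by linear_combination hx))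
  have ms : ∀ i j, m j i = m i j := fun i j => by
    conv_lhs => rw [← hsym]
    rfl
  have s10 := ms 0 1
  have s20 := ms 0 2
  have s21 := ms 1 2
  have s30 := ms 0 3
  have s31 := ms 1 3
  have s32 := ms 2 3
  have hd1 : ∀ t : k,
      m 0 0 * (m 1 1 * m 2 2 - m 1 2 * m 1 2)
      - (m 0 1 + t) * ((m 0 1 + t) * m 2 2 - m 1 2 * m 0 2)
      + m 0 2 * ((m 0 1 + t) * m 1 2 - m 1 1 * m 0 2) = 0 := by
    intro t
    have h := det_minor_eq_zero (m + t • Emat k) (hr t) ![0,1,2] ![0,1,2]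
    simp only [Matrix.det_fin_three, Matrix.submatrix_apply, Matrix.add_apply,
      Matrix.smul_apply, Emat, Matrix.cons_val', Matrix.cons_val_zero, Matrix.cons_val_one,
      Matrix.head_cons, Matrix.empty_val', Matrix.cons_val_fin_one, Matrix.head_fin_const,
      Matrix.cons_val_two, Matrix.tail_cons, Matrix.cons_val_three, Matrix.of_apply,
      smul_eq_mul, mul_zero, mul_one, add_zero, zero_add] at h
    rw [s10, s20, s21] at h
    linear_combination h
  have hd2 : ∀ t : k,
      m 0 0 * (m 1 1 * m 3 3 - m 1 3 * m 1 3)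
      - (m 0 1 + t) * ((m 0 1 + t) * m 3 3 - m 1 3 * m 0 3)
      + m 0 3 * ((m 0 1 + t) * m 1 3 - m 1 1 * m 0 3) = 0 := by
    intro t
    have h := det_minor_eq_zero (m + t • Emat k) (hr t) ![0,1,3] ![0,1,3]
    simp only [Matrix.det_fin_three, Matrix.submatrix_apply, Matrix.add_apply,
      Matrix.smul_apply, Emat, Matrix.cons_val', Matrix.cons_val_zero, Matrix.cons_val_one,
      Matrix.head_cons, Matrix.empty_val', Matrix.cons_val_fin_one, Matrix.head_fin_const,
      Matrix.cons_val_two, Matrix.tail_cons, Matrix.cons_val_three, Matrix.of_apply,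
      smul_eq_mul, mul_zero, mul_one, add_zero, zero_add] at h
    rw [s10, s30, s31] at h
    linear_combination h
  have hd3 : ∀ t : k,
      m 0 0 * (m 1 1 * m 2 3 - m 1 3 * m 1 2)
      - (m 0 1 + t) * ((m 0 1 + t) * m 2 3 - m 1 3 * m 0 2)
      + m 0 3 * ((m 0 1 + t) * m 1 2 - m 1 1 * m 0 2) = 0 := by
    intro t
    have h := det_minor_eq_zero (m + t • Emat k) (hr t) ![0,1,2] ![0,1,3]
    simp only [Matrix.det_fin_three, Matrix.submatrix_apply, Matrix.add_apply,
      Matrix.smul_apply, Emat, Matrix.cons_val', Matrix.cons_val_zero, Matrix.cons_val_one,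
      Matrix.head_cons, Matrix.empty_val', Matrix.cons_val_fin_one, Matrix.head_fin_const,
      Matrix.cons_val_two, Matrix.tail_cons, Matrix.cons_val_three, Matrix.of_apply,
      smul_eq_mul, mul_zero, mul_one, add_zero, zero_add] at h
    rw [s10, s20, s21] at h
    linear_combination h
  have e22 : m 2 2 = 0 := two_cancel _ (by linear_combination -(hd1 1) - hd1 (-1) + 2*hd1 0)
  have e33 : m 3 3 = 0 := two_cancel _ (by linear_combination -(hd2 1) - hd2 (-1) + 2*hd2 0)
  have e23 : m 2 3 = 0 := two_cancel _ (by linear_combination -(hd3 1) - hd3 (-1) + 2*hd3 0)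
  have p : m 0 2 * m 1 2 = 0 := four_cancel _ (by
    linear_combination hd1 1 - hd1 (-1) + (4 * m 0 1) * e22)
  have q : m 0 3 * m 1 3 = 0 := four_cancel _ (by
    linear_combination hd2 1 - hd2 (-1) + (4 * m 0 1) * e33)
  have r : m 0 2 * m 1 3 + m 0 3 * m 1 2 = 0 := two_cancel _ (by
    linear_combination hd3 1 - hd3 (-1) + (4 * m 0 1) * e23)
  have s1 : m 0 0 * m 1 2 ^ 2 + m 1 1 * m 0 2 ^ 2 = 0 := by
    linear_combination -(hd1 0) + (m 0 0 * m 1 1 - m 0 1 ^ 2) * e22 + (2 * m 0 1) * p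
  have s2 : m 0 0 * m 1 3 ^ 2 + m 1 1 * m 0 3 ^ 2 = 0 := by
    linear_combination -(hd2 0) + (m 0 0 * m 1 1 - m 0 1 ^ 2) * e33 + (2 * m 0 1) * q
  by_cases h02 : m 0 2 = 0
  · by_cases h03 : m 0 3 = 0
    · by_cases h12 : m 1 2 = 0
      · by_cases h13 : m 1 3 = 0
        · by_cases h00 : m 0 0 = 0
          · exact Or.inr (Or.inl ⟨h00, h02, h03, e22, e23, e33⟩)
          · by_cases h11 : m 1 1 = 0
            · exact Or.inl ⟨h11, h12, h13, e22, e23, e33⟩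
            · exact Or.inr (Or.inr ⟨h02, h03, h12, h13, e22, e23, e33, h00, h11⟩)
        · have h00 : m 0 0 = 0 := sq_cancel _ _ h13 (by linear_combination s2 - m 1 1 * m 0 3 * h03)
          exact Or.inr (Or.inl ⟨h00, h02, h03, e22, e23, e33⟩)
      · have h00 : m 0 0 = 0 := sq_cancel _ _ h12 (by linear_combination s1 - m 1 1 * m 0 2 * h02)
        exact Or.inr (Or.inl ⟨h00, h02, h03, e22, e23, e33⟩)
    · have h13 : m 1 3 = 0 := (mul_eq_zero.mp q).resolve_left h03
      have h12 : m 1 2 = 0 := by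
        have h' : m 0 3 * m 1 2 = 0 := by linear_combination r - m 1 3 * h02
        exact (mul_eq_zero.mp h').resolve_left h03
      have h11 : m 1 1 = 0 := sq_cancel _ _ h03 (by linear_combination s2 - m 0 0 * m 1 3 * h13)
      exact Or.inl ⟨h11, h12, h13, e22, e23, e33⟩
  · have h12 : m 1 2 = 0 := (mul_eq_zero.mp p).resolve_left h02
    have h13 : m 1 3 = 0 := by
      have h' : m 0 2 * m 1 3 = 0 := by linear_combination r - m 0 3 * h12
      exact (mul_eq_zero.mp h').resolve_left h02
    have h11 : m 1 1 = 0 := sq_cancel _ _ h02 (by linear_combination s1 - m 0 0 * m 1 2 * h12)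
    exact Or.inl ⟨h11, h12, h13, e22, e23, e33⟩

end Stmt5Aux

set_option maxHeartbeats 1000000 in
theorem stmt5 (k : Type*) [Field k] [IsAlgClosed k] (hchar : (2 : k) ≠ 0)
    (Q Q' : MvPolynomial (Fin 4) k)
    (hQ : Q ∈ homogeneousSubmodule (Fin 4) k 2)
    (hQ' : Q' ∈ homogeneousSubmodule (Fin 4) k 2)
    (hind : LinearIndependent k ![Q, Q'])
    (hrk : ∀ p ∈ Submodule.span k {Q, Q'}, p ≠ 0 → HasRankLE k p 2)
    (a b : MvPolynomial (Fin 4) k)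
    (ha : a ∈ homogeneousSubmodule (Fin 4) k 1)
    (hb : b ∈ homogeneousSubmodule (Fin 4) k 1)
    (hab : LinearIndependent k ![a, b])
    (hfac : Q = a * b) :
    (∃ ℓ ∈ homogeneousSubmodule (Fin 4) k 1, Q' = ℓ * a) ∨
    (∃ ℓ ∈ homogeneousSubmodule (Fin 4) k 1, Q' = ℓ * b) ∨
    (∃ α β γ : k, α ≠ 0 ∧ γ ≠ 0 ∧
      Q' = α • a ^ 2 + β • (a * b) + γ • b ^ 2) := by
  classical
  open Stmt5Aux Matrix in
  -- basic nonvanishing facts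
  have hpair := LinearIndependent.pair_iff.mp hind
  have hQ'ne : Q' ≠ 0 := fun h => one_ne_zero (hpair 0 1 (by rw [h]; simp)).2
  have hmem : ∀ t : k, Q' + t • Q ∈ Submodule.span k ({Q, Q'} : Set _) := fun t =>
    Submodule.add_mem _ (Submodule.subset_span (by simp))
      (Submodule.smul_mem _ _ (Submodule.subset_span (by simp)))
  have hne : ∀ t : k, Q' + t • Q ≠ 0 := fun t h =>
    one_ne_zero (hpair t 1 (by rw [one_smul, add_comm]; exact h)).2
  obtain ⟨M, hMsym, hMQ, hMrank⟩ :=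
    hrk Q' (Submodule.subset_span (by simp)) hQ'ne
  -- coefficient vectors of a and b
  obtain ⟨v, hv⟩ := linear_repr a ha
  obtain ⟨w, hw⟩ := linear_repr b hb
  have hvw : LinearIndependent k ![v, w] := by
    rw [LinearIndependent.pair_iff]
    intro s t hst
    apply (LinearIndependent.pair_iff.mp hab) s t
    have hcoef : ∀ i, s * v i + t * w i = 0 := fun i => by
      have := congrFun hst i
      simpa using this
    rw [hv, hw, Finset.smul_sum, Finset.smul_sum, ← Finset.sum_add_distrib]
    apply Finset.sum_eq_zero
    intro i _
    rw [smul_smul, smul_smul, ← add_smul, hcoef i, zero_smul]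
  obtain ⟨S, hSunit, hS0, hS1⟩ := complete_basis v w hvw
  have hSd : IsUnit S.det := (Matrix.isUnit_iff_isUnit_det _).mp hSunit
  -- the linear forms corresponding to the rows of S
  set L : Fin 4 → MvPolynomial (Fin 4) k := fun i => ∑ j, S i j • X j with hLdef
  have hL0 : L 0 = a := by
    rw [hLdef, hv]
    simp only [hS0]
  have hL1 : L 1 = b := by
    rw [hLdef, hw]
    simp only [hS1]
  have hLmem : ∀ i, L i ∈ homogeneousSubmodule (Fin 4) k 1 := fun i =>
    Submodule.sum_mem _ (fun j _ => Submodule.smul_mem _ _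
      ((mem_homogeneousSubmodule _ _).mpr (isHomogeneous_X _ _)))
  -- the symmetric matrix A with quadOfMat A = 2Q
  set A : Matrix (Fin 4) (Fin 4) k := Sᵀ * Emat k * S with hAdef
  have hEsym : (Emat k).IsSymm := by
    ext i j
    fin_cases i <;> fin_cases j <;> rfl
  have hAsym : A.IsSymm := by
    rw [Matrix.IsSymm, hAdef, Matrix.transpose_mul, Matrix.transpose_mul,
      Matrix.transpose_transpose, hEsym.eq, Matrix.mul_assoc]
  have hQA : quadOfMat k A = (2:k) • Q := by
    rw [hAdef, quadOfMat_transform]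
    have : ∀ i j : Fin 4, (Emat k) i j • ((∑ p, S i p • X p) * (∑ q, S j q • X q))
        = (Emat k) i j • (L i * L j) := fun i j => rfl
    simp only [this]
    simp only [Fin.sum_univ_four]
    simp [Emat]
    rw [hL0, hL1, hfac, two_smul]
    ring
  -- for every t, 2M + tA has rank ≤ 2
  have hkey : ∀ t : k, ((2:k) • M + t • A).rank ≤ 2 := by
    intro t
    obtain ⟨N, hNsym, hNq, hNrank⟩ := hrk (Q' + t • Q) (hmem t) (hne t)
    have huniq : (2:k) • M + t • A = (2:k) • N := by
      have h1 : quadOfMat k ((2:k) • M + t • A - (2:k) • N) = 0 := by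
        rw [quadOfMat_sub, quadOfMat_add, quadOfMat_smul, quadOfMat_smul, quadOfMat_smul,
          ← hMQ, ← hNq, hQA]
        rw [smul_add, smul_comm t (2:k) Q]
        abel
      have hsymdiff : ((2:k) • M + t • A - (2:k) • N).IsSymm :=
        ((hMsym.smul (2:k)).add (hAsym.smul t)).sub (hNsym.smul (2:k))
      have hz := quadOfMat_eq_zero hchar _ hsymdiff h1
      rwa [sub_eq_zero] at hz
    rw [huniq]
    have hdg : (2:k) • N = Matrix.diagonal (fun _ : Fin 4 => (2:k)) * N := by
      ext i j
      simp [Matrix.diagonal_mul]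
    rw [hdg]
    exact le_trans (Matrix.rank_mul_le_right _ _) hNrank
  -- transport to the normalized matrix m
  set m : Matrix (Fin 4) (Fin 4) k := (S⁻¹)ᵀ * ((2:k) • M) * S⁻¹ with hmdef
  have h2Msym : ((2:k) • M).IsSymm := hMsym.smul (2:k)
  have hmsym : m.IsSymm := by
    rw [Matrix.IsSymm, hmdef, Matrix.transpose_mul, Matrix.transpose_mul,
      Matrix.transpose_transpose, h2Msym.eq, Matrix.mul_assoc]
  have hSTinv : (S⁻¹)ᵀ = (Sᵀ)⁻¹ := Matrix.transpose_nonsing_inv S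
  have hST_unit : IsUnit (Sᵀ).det := by rwa [Matrix.det_transpose]
  have hinvT : (Sᵀ)⁻¹ * Sᵀ = 1 := Matrix.nonsing_inv_mul _ hST_unit
  have hSinv : S * S⁻¹ = 1 := Matrix.mul_nonsing_inv _ hSd
  have hconj : ∀ B : Matrix (Fin 4) (Fin 4) k, Sᵀ * ((S⁻¹)ᵀ * B * S⁻¹) * S = B := by
    intro B
    rw [hSTinv]
    calc Sᵀ * ((Sᵀ)⁻¹ * B * S⁻¹) * S
        = (Sᵀ * (Sᵀ)⁻¹) * B * (S⁻¹ * S) := by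
          simp only [Matrix.mul_assoc]
      _ = B := by
          rw [Matrix.mul_nonsing_inv _ hST_unit, Matrix.nonsing_inv_mul _ hSd,
            Matrix.one_mul, Matrix.mul_one]
  have hPAP : (S⁻¹)ᵀ * A * S⁻¹ = Emat k := by
    rw [hAdef, hSTinv]
    calc (Sᵀ)⁻¹ * (Sᵀ * Emat k * S) * S⁻¹
        = ((Sᵀ)⁻¹ * Sᵀ) * Emat k * (S * S⁻¹) := by simp only [Matrix.mul_assoc]
      _ = Emat k := by rw [hinvT, hSinv, Matrix.one_mul, Matrix.mul_one]
  have hrank' : ∀ t : k, (m + t • Emat k).rank ≤ 2 := by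
    intro t
    have heq : m + t • Emat k = (S⁻¹)ᵀ * ((2:k) • M + t • A) * S⁻¹ := by
      rw [hmdef, ← hPAP]
      rw [Matrix.mul_add, Matrix.add_mul]
      congr 1
      rw [Matrix.mul_smul, Matrix.smul_mul]
    rw [heq]
    exact le_trans (Matrix.rank_mul_le_left _ _)
      (le_trans (Matrix.rank_mul_le_right _ _) (hkey t))
  have hstruct := matrix_struct hchar m hmsym hrank'
  -- recover 2Q' as a combination of products of the L i
  have h2Q' : (2:k) • Q' = ∑ i, ∑ j, m i j • (L i * L j) := by
    have hSm : Sᵀ * m * S = (2:k) • M := hconj _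
    calc (2:k) • Q' = quadOfMat k ((2:k) • M) := by rw [quadOfMat_smul, ← hMQ]
      _ = quadOfMat k (Sᵀ * m * S) := by rw [hSm]
      _ = ∑ i, ∑ j, m i j • (L i * L j) := quadOfMat_transform S m
  have hms : ∀ i j, m j i = m i j := fun i j => by
    conv_lhs => rw [← hmsym]
    rfl
  have r10 := hms 0 1
  have r20 := hms 0 2
  have r21 := hms 1 2
  have r30 := hms 0 3
  have r31 := hms 1 3
  have r32 := hms 2 3
  have half : ∀ x : MvPolynomial (Fin 4) k, ((2:k)⁻¹) • ((2:k) • x) = x := fun x => by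
    rw [smul_smul, inv_mul_cancel₀ hchar, one_smul]
  rcases hstruct with ⟨h11, h12, h13, h22, h23, h33⟩ |
      ⟨h00, h02, h03, h22, h23, h33⟩ |
      ⟨h02, h03, h12, h13, h22, h23, h33, h00, h11⟩
  · -- Q' ∈ R₁ a
    left
    refine ⟨((2:k)⁻¹) • (m 0 0 • a + (2 * m 0 1) • b + (2 * m 0 2) • L 2 + (2 * m 0 3) • L 3),
      ?_, ?_⟩
    · exact Submodule.smul_mem _ _ (Submodule.add_mem _ (Submodule.add_mem _
        (Submodule.add_mem _ (Submodule.smul_mem _ _ ha) (Submodule.smul_mem _ _ hb))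
        (Submodule.smul_mem _ _ (hLmem 2))) (Submodule.smul_mem _ _ (hLmem 3)))
    · have hexp : (2:k) • Q'
          = (m 0 0 • a + (2 * m 0 1) • b + (2 * m 0 2) • L 2 + (2 * m 0 3) • L 3) * a := by
        rw [h2Q']
        simp only [Fin.sum_univ_four, r10, r20, r21, r30, r31, r32,
          h11, h12, h13, h22, h23, h33, zero_smul, add_zero, zero_add, hL0, hL1]
        simp only [smul_eq_C_mul, C_mul, map_ofNat]
        ring
      rw [← half Q', hexp, smul_mul_assoc]
  · -- Q' ∈ R₁ b
    right; left
    refine ⟨((2:k)⁻¹) • ((2 * m 0 1) • a + m 1 1 • b + (2 * m 1 2) • L 2 + (2 * m 1 3) • L 3),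
      ?_, ?_⟩
    · exact Submodule.smul_mem _ _ (Submodule.add_mem _ (Submodule.add_mem _
        (Submodule.add_mem _ (Submodule.smul_mem _ _ ha) (Submodule.smul_mem _ _ hb))
        (Submodule.smul_mem _ _ (hLmem 2))) (Submodule.smul_mem _ _ (hLmem 3)))
    · have hexp : (2:k) • Q'
          = ((2 * m 0 1) • a + m 1 1 • b + (2 * m 1 2) • L 2 + (2 * m 1 3) • L 3) * b := by
        rw [h2Q']
        simp only [Fin.sum_univ_four, r10, r20, r21, r30, r31, r32,
          h00, h02, h03, h22, h23, h33, zero_smul, add_zero, zero_add, hL0, hL1]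
        simp only [smul_eq_C_mul, C_mul, map_ofNat]
        ring
      rw [← half Q', hexp, smul_mul_assoc]
  · -- Q' = αa² + βab + γb²
    right; right
    refine ⟨(2:k)⁻¹ * m 0 0, (2:k)⁻¹ * (2 * m 0 1), (2:k)⁻¹ * m 1 1,
      mul_ne_zero (inv_ne_zero hchar) h00, mul_ne_zero (inv_ne_zero hchar) h11, ?_⟩
    have hexp : (2:k) • Q' = m 0 0 • a ^ 2 + (2 * m 0 1) • (a * b) + m 1 1 • b ^ 2 := by
      rw [h2Q']
      simp only [Fin.sum_univ_four, r10, r20, r21, r30, r31, r32,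
        h02, h03, h12, h13, h22, h23, h33, zero_smul, add_zero, zero_add, hL0, hL1]
      simp only [smul_eq_C_mul, C_mul, map_ofNat]
      ring
    rw [← half Q', hexp]
    rw [smul_add, smul_add, smul_smul, smul_smul, smul_smul]

end
end

section
/- If the quadric system associated to N₁, …, Nₙ is base point free and the quantity 2r₂ + r₁ is finite, then r₁ ∈ {0, 1}. (Final assertion of [VVW], Theorem 1.7, where 2r₂ + r₁ equals the number of isomorphism classes of point modules over the associated graded Clifford algebra.) -/
/-!
STATEMENT 8: [VVW, Theorem 1.7, final assertion]. If the quadric system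
associated to symmetric matrices N₁, …, Nₙ is base point free and 2r₂ + r₁ is
finite, then r₁ ∈ {0, 1}, where r_j is the number of one-dimensional subspaces
of span{N₁, …, Nₙ} spanned by a matrix of rank exactly j.
-/

noncomputable section

/-- A nonzero matrix has positive rank. -/
lemma aux_rank_pos {k : Type*} [Field k] {n : ℕ} {A : Matrix (Fin n) (Fin n) k}
    (h : A ≠ 0) : 0 < A.rank := by
  rw [Nat.pos_iff_ne_zero]
  intro h0
  apply h
  rw [Matrix.rank] at h0
  have hbot : LinearMap.range A.mulVecLin = ⊥ := Submodule.finrank_eq_zero.mp h0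
  have hz : A.mulVecLin = 0 := LinearMap.range_eq_bot.mp hbot
  ext i j
  have h1 : A.mulVec (Pi.single j 1) = 0 := by
    rw [← Matrix.mulVecLin_apply, hz]; rfl
  have h2 := congrFun h1 i
  simpa using h2

/-- Rank is subadditive. -/
lemma aux_rank_add_le {k : Type*} [Field k] {n : ℕ} (A B : Matrix (Fin n) (Fin n) k) :
    (A + B).rank ≤ A.rank + B.rank := by
  have hle : LinearMap.range (A + B).mulVecLin ≤
      LinearMap.range A.mulVecLin ⊔ LinearMap.range B.mulVecLin := by
    rintro x ⟨v, rfl⟩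
    rw [Matrix.mulVecLin_add]
    exact Submodule.add_mem_sup ⟨v, rfl⟩ ⟨v, rfl⟩
  have h1 := Submodule.finrank_mono hle
  have h2 := Submodule.finrank_add_le_finrank_add_finrank
    (LinearMap.range A.mulVecLin) (LinearMap.range B.mulVecLin)
  exact le_trans h1 h2

/-- Rank of a scalar multiple is at most the rank. -/
lemma aux_rank_smul_le {k : Type*} [Field k] {n : ℕ} (c : k) (A : Matrix (Fin n) (Fin n) k) :
    (c • A).rank ≤ A.rank := by
  have : c • A = (c • (1 : Matrix (Fin n) (Fin n) k)) * A := by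
    rw [Matrix.smul_mul, one_mul]
  rw [this]
  exact Matrix.rank_mul_le_right _ _

theorem stmt8 (k : Type*) [Field k] [IsAlgClosed k] (hchar : (2 : k) ≠ 0)
    (n : ℕ)
    (N : Fin n → Matrix (Fin n) (Fin n) k)
    (hsymm : ∀ i, (N i).IsSymm)
    (hbpf : ∀ v : Fin n → k, (∀ i, dotProduct v ((N i).mulVec v) = 0) → v = 0)
    (hfin1 : {W : Submodule k (Matrix (Fin n) (Fin n) k) |
        ∃ M ∈ Submodule.span k (Set.range N), M ≠ 0 ∧ W = Submodule.span k {M} ∧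
          M.rank = 1}.Finite)
    (hfin2 : {W : Submodule k (Matrix (Fin n) (Fin n) k) |
        ∃ M ∈ Submodule.span k (Set.range N), M ≠ 0 ∧ W = Submodule.span k {M} ∧
          M.rank = 2}.Finite) :
    {W : Submodule k (Matrix (Fin n) (Fin n) k) |
        ∃ M ∈ Submodule.span k (Set.range N), M ≠ 0 ∧ W = Submodule.span k {M} ∧
          M.rank = 1}.ncard = 0 ∨
    {W : Submodule k (Matrix (Fin n) (Fin n) k) |
        ∃ M ∈ Submodule.span k (Set.range N), M ≠ 0 ∧ W = Submodule.span k {M} ∧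
          M.rank = 1}.ncard = 1 := by
  set S1 : Set (Submodule k (Matrix (Fin n) (Fin n) k)) :=
    {W | ∃ M ∈ Submodule.span k (Set.range N), M ≠ 0 ∧ W = Submodule.span k {M} ∧
      M.rank = 1} with hS1
  set S2 : Set (Submodule k (Matrix (Fin n) (Fin n) k)) :=
    {W | ∃ M ∈ Submodule.span k (Set.range N), M ≠ 0 ∧ W = Submodule.span k {M} ∧
      M.rank = 2} with hS2
  by_contra hcon
  push_neg at hcon
  obtain ⟨h0, h1⟩ := hcon
  have h2 : 1 < S1.ncard := by omega
  obtain ⟨W₁, W₂, hW₁, hW₂, hWne⟩ := (Set.one_lt_ncard_iff hfin1).mp h2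
  rw [hS1, Set.mem_setOf_eq] at hW₁ hW₂
  obtain ⟨M, hMs, hM0, hWeq, hMr⟩ := hW₁
  obtain ⟨M', hMs', hM0', hWeq', hMr'⟩ := hW₂
  -- M and M' are "independent": M' is not a scalar multiple of M
  have hind : ∀ s : k, M' ≠ s • M := by
    intro s hs
    rcases eq_or_ne s 0 with rfl | hs0
    · simp at hs; exact hM0' hs
    · apply hWne
      rw [hWeq, hWeq', hs]
      exact (Submodule.span_singleton_smul_eq (IsUnit.mk0 s hs0) M).symm
  -- the family of lines
  have hmem : ∀ c : k, Submodule.span k {M + c • M'} ∈ S1 ∪ S2 := by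
    intro c
    have hne : M + c • M' ≠ 0 := by
      intro h
      rcases eq_or_ne c 0 with rfl | hc0
      · simp at h; exact hM0 h
      · apply hind (-c⁻¹)
        have : c • M' = -M := by linear_combination (norm := module) h
        have h2 : M' = c⁻¹ • (-M) := by
          rw [← this, smul_smul, inv_mul_cancel₀ hc0, one_smul]
        rw [h2]; module
    have hspan : M + c • M' ∈ Submodule.span k (Set.range N) :=
      Submodule.add_mem _ hMs (Submodule.smul_mem _ c hMs')
    have hrk1 : 0 < (M + c • M').rank := aux_rank_pos hne
    have hrk2 : (M + c • M').rank ≤ 2 := by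
      calc (M + c • M').rank ≤ M.rank + (c • M').rank := aux_rank_add_le _ _
        _ ≤ M.rank + M'.rank := by
            exact Nat.add_le_add_left (aux_rank_smul_le c M') _
        _ = 2 := by rw [hMr, hMr']
    interval_cases h : (M + c • M').rank
    · exact Or.inl ⟨M + c • M', hspan, hne, rfl, h⟩
    · exact Or.inr ⟨M + c • M', hspan, hne, rfl, h⟩
  -- injectivity of the family
  have hinj : Function.Injective
      (fun c : k => Submodule.span k {M + c • M'} :
        k → Submodule k (Matrix (Fin n) (Fin n) k)) := by
    intro c c' h
    simp only at h
    have h1 : M + c • M' ∈ Submodule.span k {M + c' • M'} := by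
      rw [← h]; exact Submodule.mem_span_singleton_self _
    obtain ⟨s, hs⟩ := Submodule.mem_span_singleton.mp h1
    by_contra hcc
    -- hs : s • (M + c' • M') = M + c • M'
    have hss : s ≠ 1 ∨ s = 1 := (ne_or_eq s 1)
    rcases hss with hs1 | rfl
    · -- (s - 1) • M = (c - s*c') • M'
      have hM'eq : M' = ((c - s * c')⁻¹ * (s - 1)) • M := by
        have hd : (c - s * c') • M' = (s - 1) • M := by
          linear_combination (norm := module) -hs
        have hsc : c - s * c' ≠ 0 := by
          intro h0
          have : (s - 1) • M = 0 := by rw [← hd, h0, zero_smul]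
          rcases smul_eq_zero.mp this with h' | h'
          · exact hs1 (by linear_combination h')
          · exact hM0 h'
        rw [mul_smul, ← hd, smul_smul, inv_mul_cancel₀ hsc, one_smul]
      exact hind _ hM'eq
    · apply hcc
      have : c • M' = c' • M' := by linear_combination (norm := module) -hs
      have h3 : (c - c') • M' = 0 := by linear_combination (norm := module) this
      rcases smul_eq_zero.mp h3 with h' | h'
      · linear_combination h'
      · exact absurd h' hM0'
  have : (S1 ∪ S2).Infinite :=
    Set.infinite_of_injective_forall_mem hinj hmem
  exact this (hfin1.union hfin2)

end
end

section
/- Suppose μ₂₃ = 1, μ₃₄² = 1, and μ₃₄ = μ₂₄ = μ₁₄² = μ₁₃². Then q₁ = z₁z₂, q₂ = z₃², q₃ = z₁² − z₂z₄, q₄ = z₂² + z₄² − z₂z₃ form a normalizing sequence in S: q₁ is a normal element of S; for each j = 1, 2, 3 the image of q_{j+1} in the quotient ring S/⟨q₁, …, q_j⟩ (quotient by the two-sided ideal generated by q₁, …, q_j) is a normal element; and the two-sided ideal ⟨q₁, q₂, q₃, q₄⟩ is proper. ([CaV], §5.3, as quoted in the survey's example on the quadric system q₁, …, q₄.) -/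
/-!
STATEMENT 12: [CaV, §5.3]. Suppose μ₂₃ = 1, μ₃₄² = 1, and
μ₃₄ = μ₂₄ = μ₁₄² = μ₁₃². Then q₁ = z₁z₂, q₂ = z₃², q₃ = z₁² − z₂z₄,
q₄ = z₂² + z₄² − z₂z₃ form a normalizing sequence in S: q₁ is a normal element
of S; for each j = 1, 2, 3 the image of q_{j+1} in S/⟨q₁, …, q_j⟩ is a normal
element; and the two-sided ideal ⟨q₁, q₂, q₃, q₄⟩ is proper.
-/

noncomputable section

/-- The defining relations of the skew polynomial algebra `S`:
`z_j z_i = μ_{ij} • (z_i z_j)` for all `i, j`. -/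
inductive SkewRel (k : Type*) [CommRing k] (n : ℕ) (μ : Fin n → Fin n → k) :
    FreeAlgebra k (Fin n) → FreeAlgebra k (Fin n) → Prop
  | rel (i j : Fin n) : SkewRel k n μ
      (FreeAlgebra.ι k j * FreeAlgebra.ι k i)
      (μ i j • (FreeAlgebra.ι k i * FreeAlgebra.ι k j))

/-- The skew polynomial algebra `S`, a quotient of the free algebra on `n`
generators by the two-sided ideal generated by the skew-commutation relations. -/
abbrev SkewAlg (k : Type*) [CommRing k] (n : ℕ) (μ : Fin n → Fin n → k) :=
  RingQuot (SkewRel k n μ)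

/-- The degree-one generators `z_i` of `S`. -/
def zgen (k : Type*) [CommRing k] (n : ℕ) (μ : Fin n → Fin n → k) (i : Fin n) :
    SkewAlg k n μ :=
  RingQuot.mkAlgHom k (SkewRel k n μ) (FreeAlgebra.ι k i)

/-- An element `s` of a ring `T` is normal if `sT = Ts`. -/
def IsNormalElem {T : Type*} [Ring T] (s : T) : Prop :=
  Set.range (fun t => s * t) = Set.range (fun t => t * s)

namespace Stmt12Aux

variable {k : Type*} [CommRing k] {n : ℕ} {μ : Fin n → Fin n → k}

lemma zz (i j : Fin n) : zgen k n μ j * zgen k n μ i = μ i j • (zgen k n μ i * zgen k n μ j) := by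
  have := RingQuot.mkAlgHom_rel k (SkewRel.rel (k := k) (n := n) (μ := μ) i j)
  simpa [zgen, map_mul, map_smul] using this

/-- Rescaling endomorphism of the skew algebra. -/
def scaleA (c : Fin n → k) : SkewAlg k n μ →ₐ[k] SkewAlg k n μ :=
  RingQuot.liftAlgHom k ⟨FreeAlgebra.lift k (fun i => c i • zgen k n μ i), by
    rintro x y ⟨i, j⟩
    simp only [map_mul, map_smul, FreeAlgebra.lift_ι_apply]
    rw [smul_mul_smul_comm, zz i j, smul_mul_smul_comm, smul_smul, smul_smul]
    congr 1
    ring⟩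

lemma scaleA_z (c : Fin n → k) (i : Fin n) : scaleA c (zgen k n μ i) = c i • zgen k n μ i := by
  simp [scaleA, zgen, RingQuot.liftAlgHom_mkAlgHom_apply]

lemma scaleA_scaleA (c c' : Fin n → k) (h : ∀ i, c i * c' i = 1) (s : SkewAlg k n μ) :
    scaleA c (scaleA c' s) = s := by
  have : (scaleA (μ := μ) c).comp (scaleA c') = AlgHom.id k _ := by
    apply RingQuot.ringQuot_ext'
    apply FreeAlgebra.hom_ext
    funext i
    show scaleA c (scaleA c' (zgen k n μ i)) = zgen k n μ i
    rw [scaleA_z, map_smul, scaleA_z, smul_smul, mul_comm (c' i), h i, one_smul]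
  exact congrArg (fun f => f s) (congrArg DFunLike.coe this)

lemma comm_all {T : Type*} [Ring T] (π : SkewAlg k n μ →+* T)
    (c : Fin n → k) (q : SkewAlg k n μ)
    (h : ∀ i, π (q * zgen k n μ i) = π ((c i • zgen k n μ i) * q)) :
    ∀ t, π (q * t) = π (scaleA c t * q) := by
  intro t
  obtain ⟨x, rfl⟩ := RingQuot.mkAlgHom_surjective k (SkewRel k n μ) t
  induction x with
  | grade0 r =>
      rw [AlgHom.commutes, AlgHom.commutes, Algebra.commutes]
  | grade1 i =>
      rw [show (RingQuot.mkAlgHom k (SkewRel k n μ)) (FreeAlgebra.ι k i) = zgen k n μ i from rfl,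
        scaleA_z]
      exact h i
  | mul a b ha hb =>
      rw [map_mul (RingQuot.mkAlgHom k (SkewRel k n μ))]
      generalize (RingQuot.mkAlgHom k (SkewRel k n μ)) a = A at ha
      generalize (RingQuot.mkAlgHom k (SkewRel k n μ)) b = B at hb
      calc π (q * (A * B)) = π (q * A) * π B := by rw [← map_mul, mul_assoc]
        _ = π (scaleA c A * q) * π B := by rw [ha]
        _ = π (scaleA c A) * π (q * B) := by rw [map_mul, map_mul, mul_assoc, ← map_mul]
        _ = π (scaleA c A) * π (scaleA c B * q) := by rw [hb]
        _ = π (scaleA c (A * B) * q) := by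
            rw [map_mul (scaleA c), ← map_mul, ← mul_assoc, ← map_mul]
  | add a b ha hb =>
      rw [map_add, mul_add, map_add, map_add, add_mul, map_add, ha, hb]

lemma isNormal_pi {T : Type*} [Ring T] (π : SkewAlg k n μ →+* T) (hπ : Function.Surjective π)
    (c c' : Fin n → k) (hcc : ∀ i, c i * c' i = 1) (q : SkewAlg k n μ)
    (h : ∀ i, π (q * zgen k n μ i) = π ((c i • zgen k n μ i) * q)) :
    IsNormalElem (π q) := by
  have main := comm_all π c q h
  ext u
  simp only [Set.mem_range]
  constructor
  · rintro ⟨t, rfl⟩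
    obtain ⟨s, rfl⟩ := hπ t
    exact ⟨π (scaleA c s), by rw [← map_mul, ← main, map_mul]⟩
  · rintro ⟨t, rfl⟩
    obtain ⟨s, rfl⟩ := hπ t
    have hm := main (scaleA c' s)
    rw [scaleA_scaleA c c' hcc] at hm
    exact ⟨π (scaleA c' s), by rw [← map_mul, hm, map_mul]⟩

lemma mk'_eq_of_sub_mem {R : Type*} [Ring R] (I : TwoSidedIdeal R) {a b : R} (h : a - b ∈ I) :
    I.ringCon.mk' a = I.ringCon.mk' b :=
  Quotient.sound' ((I.rel_iff a b).2 h)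

lemma mk'_surj {R : Type*} [Ring R] (I : TwoSidedIdeal R) :
    Function.Surjective I.ringCon.mk' :=
  fun x => Quotient.inductionOn' x fun a => ⟨a, rfl⟩

end Stmt12Aux

open Stmt12Aux in
theorem stmt12 (k : Type*) [Field k] [IsAlgClosed k] (hchar : (2 : k) ≠ 0)
    (μ : Fin 4 → Fin 4 → k)
    (hμ0 : ∀ i j, μ i j ≠ 0)
    (hμd : ∀ i, μ i i = 1)
    (hμi : ∀ i j, μ i j * μ j i = 1)
    (h23 : μ 1 2 = 1) (h34sq : (μ 2 3) ^ 2 = 1)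
    (h3424 : μ 2 3 = μ 1 3) (h2414 : μ 1 3 = (μ 0 3) ^ 2)
    (h1413 : (μ 0 3) ^ 2 = (μ 0 2) ^ 2)
    (z : Fin 4 → SkewAlg k 4 μ) (hz : z = zgen k 4 μ)
    (q₁ q₂ q₃ q₄ : SkewAlg k 4 μ)
    (hq₁ : q₁ = z 0 * z 1) (hq₂ : q₂ = (z 2) ^ 2)
    (hq₃ : q₃ = (z 0) ^ 2 - z 1 * z 3)
    (hq₄ : q₄ = (z 1) ^ 2 + (z 3) ^ 2 - z 1 * z 2) :
    IsNormalElem q₁ ∧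
    IsNormalElem ((TwoSidedIdeal.span {q₁}).ringCon.mk' q₂) ∧
    IsNormalElem ((TwoSidedIdeal.span {q₁, q₂}).ringCon.mk' q₃) ∧
    IsNormalElem ((TwoSidedIdeal.span {q₁, q₂, q₃}).ringCon.mk' q₄) ∧
    TwoSidedIdeal.span {q₁, q₂, q₃, q₄} ≠ ⊤ := by
  set m : k := μ 2 3 with hmdef
  have hm : m * m = 1 := by rw [← pow_two]; exact h34sq
  have f13 : μ 1 3 = m := h3424.symm
  have f31 : μ 3 1 = m := by
    have h1 := hμi 1 3
    rw [f13] at h1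
    calc μ 3 1 = (m * m) * μ 3 1 := by rw [hm, one_mul]
      _ = m * (m * μ 3 1) := by ring
      _ = m := by rw [h1, mul_one]
  have f32 : μ 3 2 = m := by
    have h1 := hμi 2 3
    rw [← hmdef] at h1
    calc μ 3 2 = (m * m) * μ 3 2 := by rw [hm, one_mul]
      _ = m * (m * μ 3 2) := by ring
      _ = m := by rw [h1, mul_one]
  have f02 : μ 0 2 * μ 0 2 = m := by rw [← pow_two, ← h1413, ← h2414, f13]
  have f03 : μ 0 3 * μ 0 3 = m := by rw [← pow_two, ← h2414, f13]
  have hzz : ∀ i j, z j * z i = μ i j • (z i * z j) := by rw [hz]; exact zz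
  have s10 := hzz 0 1
  have s20 := hzz 0 2
  have s30 := hzz 0 3
  have s21 : z 2 * z 1 = z 1 * z 2 := by rw [hzz 1 2, h23, one_smul]
  have s31 : z 3 * z 1 = m • (z 1 * z 3) := by rw [hzz 1 3, f13]
  have s32 : z 3 * z 2 = m • (z 2 * z 3) := by rw [hzz 2 3, ← hmdef]
  have t10 : ∀ x, z 1 * (z 0 * x) = μ 0 1 • (z 0 * (z 1 * x)) := fun x => by
    rw [← mul_assoc, s10, smul_mul_assoc, mul_assoc]
  have t20 : ∀ x, z 2 * (z 0 * x) = μ 0 2 • (z 0 * (z 2 * x)) := fun x => by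
    rw [← mul_assoc, s20, smul_mul_assoc, mul_assoc]
  have t30 : ∀ x, z 3 * (z 0 * x) = μ 0 3 • (z 0 * (z 3 * x)) := fun x => by
    rw [← mul_assoc, s30, smul_mul_assoc, mul_assoc]
  have t21 : ∀ x, z 2 * (z 1 * x) = z 1 * (z 2 * x) := fun x => by
    rw [← mul_assoc, s21, mul_assoc]
  have t31 : ∀ x, z 3 * (z 1 * x) = m • (z 1 * (z 3 * x)) := fun x => by
    rw [← mul_assoc, s31, smul_mul_assoc, mul_assoc]
  have t32 : ∀ x, z 3 * (z 2 * x) = m • (z 2 * (z 3 * x)) := fun x => by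
    rw [← mul_assoc, s32, smul_mul_assoc, mul_assoc]
  refine ⟨?_, ?_, ?_, ?_, ?_⟩
  · -- q₁ normal in S
    have h : ∀ i, (RingHom.id (SkewAlg k 4 μ)) (q₁ * z i) =
        (RingHom.id (SkewAlg k 4 μ)) (((μ i 0 * μ i 1) • z i) * q₁) := by
      intro i
      simp only [RingHom.id_apply, hq₁, smul_mul_assoc]
      rw [mul_assoc, hzz i 1, mul_smul_comm, ← mul_assoc, hzz i 0, smul_mul_assoc, smul_smul,
        mul_comm (μ i 1), mul_assoc]
    simp only [hz] at h
    have := isNormal_pi (RingHom.id _) Function.surjective_id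
      (fun i => μ i 0 * μ i 1) (fun i => μ 0 i * μ 1 i)
      (fun i => by rw [mul_mul_mul_comm, hμi, hμi, one_mul]) q₁ h
    simpa using this
  · -- q₂ normal mod (q₁)
    have h : ∀ i, (TwoSidedIdeal.span {q₁}).ringCon.mk' (q₂ * z i) =
        (TwoSidedIdeal.span {q₁}).ringCon.mk' (((μ i 2 * μ i 2) • z i) * q₂) := by
      intro i
      congr 1
      simp only [hq₂, pow_two, smul_mul_assoc]
      rw [mul_assoc, hzz i 2, mul_smul_comm, ← mul_assoc, hzz i 2, smul_mul_assoc, smul_smul,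
        mul_assoc]
    simp only [hz] at h
    exact isNormal_pi _ (mk'_surj _) (fun i => μ i 2 * μ i 2) (fun i => μ 2 i * μ 2 i)
      (fun i => by rw [mul_mul_mul_comm, hμi, one_mul]) q₂ h
  · -- q₃ normal mod (q₁, q₂)
    have hq1mem : q₁ ∈ TwoSidedIdeal.span {q₁, q₂} :=
      TwoSidedIdeal.subset_span (by simp)
    have h0 : (TwoSidedIdeal.span {q₁, q₂}).ringCon.mk' (q₃ * z 0) =
        (TwoSidedIdeal.span {q₁, q₂}).ringCon.mk' (((1 : k) • z 0) * q₃) := by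
      apply mk'_eq_of_sub_mem
      rw [show q₃ * z 0 - ((1 : k) • z 0) * q₃ = q₁ * ((1 - μ 0 3 * μ 0 1) • z 3) from by
        rw [hq₃, hq₁]
        simp only [pow_two, sub_mul, mul_sub, add_mul, mul_add, smul_sub, smul_add,
          smul_mul_assoc, mul_smul_comm, smul_smul, mul_assoc, one_smul,
          s10, s20, s30, s21, s31, s32, t10, t20, t30, t21, t31, t32]
        match_scalars <;> first
          | ring1
          | linear_combination hm
          | linear_combination -hm
          | linear_combination f02
          | linear_combination f03
          | linear_combination -hm - m*f02
          | linear_combination -hm - m*f03]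
      exact TwoSidedIdeal.mul_mem_right _ _ _ hq1mem
    have h1 : (TwoSidedIdeal.span {q₁, q₂}).ringCon.mk' (q₃ * z 1) =
        (TwoSidedIdeal.span {q₁, q₂}).ringCon.mk' ((m • z 1) * q₃) := by
      apply mk'_eq_of_sub_mem
      rw [show q₃ * z 1 - (m • z 1) * q₃ = ((1 - m * (μ 0 1 * μ 0 1)) • z 0) * q₁ from by
        rw [hq₃, hq₁]
        simp only [pow_two, sub_mul, mul_sub, add_mul, mul_add, smul_sub, smul_add,
          smul_mul_assoc, mul_smul_comm, smul_smul, mul_assoc, one_smul,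
          s10, s20, s30, s21, s31, s32, t10, t20, t30, t21, t31, t32]
        match_scalars <;> first
          | ring1
          | linear_combination hm
          | linear_combination -hm
          | linear_combination f02
          | linear_combination f03
          | linear_combination -hm - m*f02
          | linear_combination -hm - m*f03]
      exact TwoSidedIdeal.mul_mem_left _ _ _ hq1mem
    have h2 : (TwoSidedIdeal.span {q₁, q₂}).ringCon.mk' (q₃ * z 2) =
        (TwoSidedIdeal.span {q₁, q₂}).ringCon.mk' ((m • z 2) * q₃) := by
      congr 1
      rw [hq₃]
      simp only [pow_two, sub_mul, mul_sub, add_mul, mul_add, smul_sub, smul_add,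
        smul_mul_assoc, mul_smul_comm, smul_smul, mul_assoc, one_smul,
        s10, s20, s30, s21, s31, s32, t10, t20, t30, t21, t31, t32]
      match_scalars <;> first
        | ring1
        | linear_combination hm
        | linear_combination -hm
        | linear_combination f02
        | linear_combination f03
        | linear_combination -hm - m*f02
        | linear_combination -hm - m*f03
    have h3 : (TwoSidedIdeal.span {q₁, q₂}).ringCon.mk' (q₃ * z 3) =
        (TwoSidedIdeal.span {q₁, q₂}).ringCon.mk' ((m • z 3) * q₃) := by
      congr 1
      rw [hq₃]
      simp only [pow_two, sub_mul, mul_sub, add_mul, mul_add, smul_sub, smul_add,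
        smul_mul_assoc, mul_smul_comm, smul_smul, mul_assoc, one_smul,
        s10, s20, s30, s21, s31, s32, t10, t20, t30, t21, t31, t32]
      match_scalars <;> first
        | ring1
        | linear_combination hm
        | linear_combination -hm
        | linear_combination f02
        | linear_combination f03
        | linear_combination -hm - m*f02
        | linear_combination -hm - m*f03
    simp only [hz] at h0 h1 h2 h3
    refine isNormal_pi _ (mk'_surj _) ![1, m, m, m] ![1, m, m, m]
      (fun i => by fin_cases i <;> simp [hm]) q₃ ?_
    intro i
    fin_cases i
    exacts [h0, h1, h2, h3]
  · -- q₄ normal mod (q₁, q₂, q₃)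
    have hq1mem : q₁ ∈ TwoSidedIdeal.span {q₁, q₂, q₃} :=
      TwoSidedIdeal.subset_span (by simp)
    have h0 : (TwoSidedIdeal.span {q₁, q₂, q₃}).ringCon.mk' (q₄ * z 0) =
        (TwoSidedIdeal.span {q₁, q₂, q₃}).ringCon.mk' ((m • z 0) * q₄) := by
      apply mk'_eq_of_sub_mem
      rw [show q₄ * z 0 - (m • z 0) * q₄ =
          q₁ * ((μ 0 1 * μ 0 1 - m) • z 1 - (μ 0 1 * μ 0 2 - m) • z 2) from by
        rw [hq₄, hq₁]
        simp only [pow_two, sub_mul, mul_sub, add_mul, mul_add, smul_sub, smul_add,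
          smul_mul_assoc, mul_smul_comm, smul_smul, mul_assoc, one_smul,
          s10, s20, s30, s21, s31, s32, t10, t20, t30, t21, t31, t32]
        match_scalars <;> first
          | ring1
          | linear_combination hm
          | linear_combination -hm
          | linear_combination f02
          | linear_combination f03
          | linear_combination -hm - m*f02
          | linear_combination -hm - m*f03]
      exact TwoSidedIdeal.mul_mem_right _ _ _ hq1mem
    have h1 : (TwoSidedIdeal.span {q₁, q₂, q₃}).ringCon.mk' (q₄ * z 1) =
        (TwoSidedIdeal.span {q₁, q₂, q₃}).ringCon.mk' (((1 : k) • z 1) * q₄) := by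
      congr 1
      rw [hq₄]
      simp only [pow_two, sub_mul, mul_sub, add_mul, mul_add, smul_sub, smul_add,
        smul_mul_assoc, mul_smul_comm, smul_smul, mul_assoc, one_smul,
        s10, s20, s30, s21, s31, s32, t10, t20, t30, t21, t31, t32]
      match_scalars <;> first
        | ring1
        | linear_combination hm
        | linear_combination -hm
        | linear_combination f02
        | linear_combination f03
        | linear_combination -hm - m*f02
        | linear_combination -hm - m*f03
    have h2 : (TwoSidedIdeal.span {q₁, q₂, q₃}).ringCon.mk' (q₄ * z 2) =
        (TwoSidedIdeal.span {q₁, q₂, q₃}).ringCon.mk' (((1 : k) • z 2) * q₄) := by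
      congr 1
      rw [hq₄]
      simp only [pow_two, sub_mul, mul_sub, add_mul, mul_add, smul_sub, smul_add,
        smul_mul_assoc, mul_smul_comm, smul_smul, mul_assoc, one_smul,
        s10, s20, s30, s21, s31, s32, t10, t20, t30, t21, t31, t32]
      match_scalars <;> first
        | ring1
        | linear_combination hm
        | linear_combination -hm
        | linear_combination f02
        | linear_combination f03
        | linear_combination -hm - m*f02
        | linear_combination -hm - m*f03
    have h3 : (TwoSidedIdeal.span {q₁, q₂, q₃}).ringCon.mk' (q₄ * z 3) =
        (TwoSidedIdeal.span {q₁, q₂, q₃}).ringCon.mk' (((1 : k) • z 3) * q₄) := by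
      congr 1
      rw [hq₄]
      simp only [pow_two, sub_mul, mul_sub, add_mul, mul_add, smul_sub, smul_add,
        smul_mul_assoc, mul_smul_comm, smul_smul, mul_assoc, one_smul,
        s10, s20, s30, s21, s31, s32, t10, t20, t30, t21, t31, t32]
      match_scalars <;> first
        | ring1
        | linear_combination hm
        | linear_combination -hm
        | linear_combination f02
        | linear_combination f03
        | linear_combination -hm - m*f02
        | linear_combination -hm - m*f03
    simp only [hz] at h0 h1 h2 h3
    refine isNormal_pi _ (mk'_surj _) ![m, 1, 1, 1] ![m, 1, 1, 1]
      (fun i => by fin_cases i <;> simp [hm]) q₄ ?_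
    intro i
    fin_cases i
    exacts [h0, h1, h2, h3]
  · -- properness
    intro htop
    have h1 : (1 : SkewAlg k 4 μ) ∈ TwoSidedIdeal.span {q₁, q₂, q₃, q₄} := by
      rw [htop]; exact TwoSidedIdeal.mem_top _
    set ε : SkewAlg k 4 μ →ₐ[k] k :=
      RingQuot.liftAlgHom k ⟨FreeAlgebra.lift k (fun _ => (0 : k)), by
        rintro x y ⟨i, j⟩
        simp [map_mul, FreeAlgebra.lift_ι_apply]⟩ with hε
    have hεz : ∀ i, ε (z i) = 0 := by
      intro i
      rw [hz]
      simp [hε, zgen, RingQuot.liftAlgHom_mkAlgHom_apply]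
    have hker : ({q₁, q₂, q₃, q₄} : Set (SkewAlg k 4 μ)) ⊆ TwoSidedIdeal.ker ε := by
      intro x hx
      simp only [Set.mem_insert_iff, Set.mem_singleton_iff] at hx
      rw [SetLike.mem_coe, TwoSidedIdeal.mem_ker]
      rcases hx with rfl | rfl | rfl | rfl
      · rw [hq₁]; simp [hεz]
      · rw [hq₂]; simp [hεz]
      · rw [hq₃]; simp [hεz]
      · rw [hq₄]; simp [hεz]
    have := TwoSidedIdeal.mem_span_iff.1 h1 (TwoSidedIdeal.ker ε) hker
    rw [TwoSidedIdeal.mem_ker, map_one] at this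
    exact one_ne_zero this

end
end
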